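/- In the two-user routing game on the load-balancing network, if additionally 0 < 2δ < r and c ≥ 4L, then for every degree of cooperation β ∈ (1/2, 1], the altruistic user 1's best response to user 2's delta-load-taker strategy x₂ = r − δ is the load-taker strategy: x₁ = r minimizes the perceived cost Ĵ₁(·, r − δ) = (1 − β)·J₁(·, r − δ) + β·J₂(·, r − δ) over [0, r]. -/

import Mathlib

/-- Elbow latency function with parameters `r, L, δ`. -/
noncomputable def T (r L δ x : ℝ) : ℝ := max 0 (L / δ * (x - r) + L)

/-- Cost of user 1 in the two-user load-balancing game. -/
noncomputable def J₁ (r L δ c x₁ x₂ : ℝ) : ℝ :=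
  x₁ * T r L δ (x₁ + (r - x₂)) + (r - x₁) * (c + T r L δ (x₂ + (r - x₁)))

/-- Cost of user 2 in the two-user load-balancing game. -/
noncomputable def J₂ (r L δ c x₁ x₂ : ℝ) : ℝ :=
  x₂ * T r L δ (x₂ + (r - x₁)) + (r - x₂) * (c + T r L δ (x₁ + (r - x₂)))

/-- Perceived cost of the unilaterally altruistic user 1 with degree of cooperation `β`. -/
noncomputable def Jhat₁ (r L δ c β x₁ x₂ : ℝ) : ℝ :=
  (1 - β) * J₁ r L δ c x₁ x₂ + β * J₂ r L δ c x₁ x₂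
theorem best_response_of_altruistic_user_is_load_taker
    (r L δ c : ℝ) (hδ : 0 < δ) (hδL : δ < L) (hLc : L < c) (hcδ : c * δ < r * L)
    (hr : 2 * δ < r) (hc : 4 * L ≤ c)
    (β : ℝ) (hβ : β ∈ Set.Ioc (1 / 2 : ℝ) 1) :
    ∀ x₁ ∈ Set.Icc (0 : ℝ) r,
      Jhat₁ r L δ c β r (r - δ) ≤ Jhat₁ r L δ c β x₁ (r - δ) := by
  obtain ⟨hβ1, hβ2⟩ := hβ
  rintro x₁ ⟨hx0, hxr⟩
  have hδ' : δ ≠ 0 := ne_of_gt hδ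
  have hL : 0 < L := hδ.trans hδL
  set k := L / δ with hkdef
  have hk : k * δ = L := div_mul_cancel₀ L hδ'
  have hkpos : 0 < k := div_pos hL hδ
  have hkr : c < k * r := by
    rw [hkdef, div_mul_eq_mul_div, lt_div_iff₀ hδ]; nlinarith
  have hTa : T r L δ (r + (r - (r - δ))) = 2 * L := by
    unfold T
    rw [show L / δ * (r + (r - (r - δ)) - r) + L = 2 * L by field_simp; ring,
      max_eq_right (by linarith)]
  have hTb : T r L δ ((r - δ) + (r - r)) = 0 := by
    unfold T
    rw [show L / δ * ((r - δ) + (r - r) - r) + L = 0 by field_simp; ring,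
      max_eq_left le_rfl]
  have hT2 : T r L δ ((r - δ) + (r - x₁)) = k * (r - x₁) := by
    unfold T
    rw [show L / δ * ((r - δ) + (r - x₁) - r) + L = L / δ * (r - x₁) by
      field_simp; ring, ← hkdef]
    exact max_eq_right (mul_nonneg hkpos.le (by linarith))
  rcases le_or_gt (r - 2 * δ) x₁ with h | h
  · -- Case A: T(f₁) = k·(x₁ − r) + 2L
    have hT1 : T r L δ (x₁ + (r - (r - δ))) = k * (x₁ - r) + 2 * L := by
      unfold T
      rw [show L / δ * (x₁ + (r - (r - δ)) - r) + L = L / δ * (x₁ - r) + 2 * L by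
        field_simp; ring, ← hkdef]
      refine max_eq_right ?_
      nlinarith [mul_le_mul_of_nonneg_left (by linarith : -(2 * δ) ≤ x₁ - r) hkpos.le]
    simp only [Jhat₁, J₁, J₂, hT1, hT2, hTa, hTb]
    rw [← hk]
    have h1 : (0:ℝ) ≤ (r - x₁) * ((2 * β - 1) * (k * r - c)) := by
      apply mul_nonneg (by linarith)
      apply mul_nonneg (by linarith) (by linarith)
    have h2 : (0:ℝ) ≤ (r - x₁) * (β * c - 2 * (k * δ)) := by
      apply mul_nonneg (by linarith)
      nlinarith
    have h3 : (0:ℝ) ≤ 2 * (1 - β) * k * ((r - x₁) * (r - x₁)) := by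
      apply mul_nonneg
      · apply mul_nonneg (by linarith) hkpos.le
      · exact mul_nonneg (by linarith) (by linarith)
    linarith [h1, h2, h3]
  · -- Case B: T(f₁) = 0
    have hT1 : T r L δ (x₁ + (r - (r - δ))) = 0 := by
      unfold T
      rw [show L / δ * (x₁ + (r - (r - δ)) - r) + L = L / δ * (x₁ - r) + 2 * L by
        field_simp; ring, ← hkdef]
      refine max_eq_left ?_
      nlinarith [mul_le_mul_of_nonneg_left (by linarith : x₁ - r ≤ -(2 * δ)) hkpos.le]
    simp only [Jhat₁, J₁, J₂, hT1, hT2, hTa, hTb]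
    rw [← hk]
    have hu2 : 2 * δ ≤ r - x₁ := by linarith
    have g1 : (0:ℝ) ≤ β * (r - δ) * k * (r - x₁ - 2 * δ) := by
      apply mul_nonneg
      · exact mul_nonneg (mul_nonneg (by linarith) (by linarith)) hkpos.le
      · linarith
    have g2 : (0:ℝ) ≤ (1 - β) * k * ((r - x₁) * (r - x₁)) := by
      apply mul_nonneg (mul_nonneg (by linarith) hkpos.le)
      exact mul_nonneg (by linarith) (by linarith)
    have g3 : (0:ℝ) ≤ (1 - β) * (r - x₁ - 2 * δ) * c := by
      apply mul_nonneg (mul_nonneg (by linarith) (by linarith)) (by linarith)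
    have g4 : (0:ℝ) ≤ 2 * δ * ((2 * β - 1) * k * (r - 2 * δ)) := by
      apply mul_nonneg (by linarith)
      exact mul_nonneg (mul_nonneg (by linarith) hkpos.le) (by linarith)
    have g5 : (0:ℝ) ≤ 2 * δ * ((1 - β) * (c - 2 * (k * δ))) := by
      apply mul_nonneg (by linarith)
      apply mul_nonneg (by linarith)
      nlinarith
    linarith [g1, g2, g3, g4, g5]
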